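/- (Lower diagonal derivative inequality for the covariance evolution.) Let ε > 0, let J ⊆ {1,…,n} with selection matrix H_J, let Ω be a |J|×|J| diagonal matrix with 0 ≤ Ω_{j,j} ≤ ω_max, let φ be an n×n real matrix with nonnegative entries, and let P : [0,∞) → ℝ^{n×n} be a differentiable function taking values in the symmetric positive semidefinite matrices with [P_t]_{k,k} > 0 for all k, t. Let F : [0,∞) → ℝ^{n×n} satisfy [F_t + F_tᵀ]_{k,k} ≥ −2C·√( [P_t]_{k,k} · m(t) ) for a constant C ≥ 0, where m(t) := max_j [P_t]_{j,j}, and suppose P solves d/dt P_t = (F_t + F_tᵀ) + (P_t†P_t + P_tP_t†) − (1/(2ε))·( (P_t∘φ)H_JᵀΩH_JP_t + P_tH_JᵀΩH_J(P_t∘φ) ), with P† the diagonal approximate inverse and ∘ the Hadamard product. Then for every k and t, d/dt [P_t]_{k,k} ≥ −2C·√( [P_t]_{k,k}·m(t) ) − ( C_φ^{(J)}(k)·ω_max/ε )·[P_t]_{k,k}·m(t) + 2, where C_φ^{(J)}(k) := Σ_{j∈J} φ_{k,j}. -/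

import Mathlib

open scoped Matrix

/-- The selection (observation) matrix `H_J` of an index set `J`: the `|J| × n` matrix
whose rows are the standard basis vectors `e_jᵀ` for `j ∈ J`. -/
def selMatrix {n : ℕ} (J : Finset (Fin n)) : Matrix {j // j ∈ J} (Fin n) ℝ :=
  Matrix.of fun j l => if (j : Fin n) = l then (1 : ℝ) else 0

/-- The diagonal approximate inverse `P†` of a matrix: `[P†]_{k,k} = 1/[P]_{k,k}` and
zero off the diagonal. -/
noncomputable def diagInv {n : ℕ} (M : Matrix (Fin n) (Fin n) ℝ) :
    Matrix (Fin n) (Fin n) ℝ :=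
  Matrix.diagonal fun k => 1 / M k k

/-- The right-hand side of the covariance evolution equation of the localised
Ensemble Kalman–Bucy filter with partial observations:
`(F + Fᵀ) + (P†P + PP†) − (1/(2ε)) ((P∘φ)H_JᵀΩH_JP + PH_JᵀΩH_J(P∘φ))`. -/
noncomputable def covRHS {n : ℕ} (ε : ℝ) (J : Finset (Fin n)) (ω : Fin n → ℝ)
    (φ F P : Matrix (Fin n) (Fin n) ℝ) : Matrix (Fin n) (Fin n) ℝ :=
  (F + Fᵀ) + (diagInv P * P + P * diagInv P) -
    (1 / (2 * ε)) •
      ((P.hadamard φ) * (selMatrix J)ᵀ * Matrix.diagonal (fun j : {j // j ∈ J} => ω j)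
          * selMatrix J * P +
        P * (selMatrix J)ᵀ * Matrix.diagonal (fun j : {j // j ∈ J} => ω j)
          * selMatrix J * (P.hadamard φ))

section Helpers

lemma trace_transpose_mul_self_eq_zero' {m n : ℕ} {A : Matrix (Fin m) (Fin n) ℝ}
    (h : (Aᵀ * A).trace = 0) : A = 0 := by
  have hsum : ∑ j, ∑ i, A i j * A i j = 0 := by
    simpa [Matrix.trace, Matrix.diag, Matrix.mul_apply, Matrix.transpose_apply] using h
  ext i j
  have h1 := (Finset.sum_eq_zero_iff_of_nonneg
    (fun j _ => Finset.sum_nonneg fun i _ => mul_self_nonneg (A i j))).mp hsum j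
    (Finset.mem_univ j)
  have h2 := (Finset.sum_eq_zero_iff_of_nonneg
    (fun i _ => mul_self_nonneg (A i j))).mp h1 i (Finset.mem_univ i)
  simpa [mul_self_eq_zero] using h2

lemma real_conjTranspose_eq {p q : ℕ} (A : Matrix (Fin p) (Fin q) ℝ) : Aᴴ = Aᵀ :=
  A.conjTranspose_eq_transpose_of_trivial

/-- Core algebra lemma: if `Ψ` is antisymmetric, `D = R*R`, `P = S*S` with `R,S`
symmetric, and `Ψ D P + P D Ψ = 0`, then the diagonal of `Ψ D P` vanishes. -/
lemma core_diag_zero {n : ℕ} (R S Ψ : Matrix (Fin n) (Fin n) ℝ)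
    (hR : Rᵀ = R) (hS : Sᵀ = S) (hΨ : Ψᵀ = -Ψ)
    (hc : Ψ * (R * R) * (S * S) + (S * S) * (R * R) * Ψ = 0) :
    ∀ k, (Ψ * (R * R) * (S * S)) k k = 0 := by
  intro k
  set K : Matrix (Fin n) (Fin n) ℝ := R * S with hK
  set T : Matrix (Fin n) (Fin n) ℝ := R * Ψ * R with hT
  have hKt : Kᵀ = S * R := by rw [hK, Matrix.transpose_mul, hR, hS]
  have hQ : K * Kᵀ = R * (S * S) * R := by
    rw [hKt, hK]; simp only [Matrix.mul_assoc]
  have hTt : Tᵀ = -T := by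
    rw [hT, Matrix.transpose_mul, Matrix.transpose_mul, hR, hΨ]
    simp only [Matrix.mul_neg, Matrix.neg_mul, Matrix.mul_assoc]
  -- sandwich identity
  have hsand : T * (K * Kᵀ) + (K * Kᵀ) * T = 0 := by
    have h1 : T * (K * Kᵀ) = R * (Ψ * (R * R) * (S * S)) * R := by
      rw [hQ, hT]; simp only [Matrix.mul_assoc]
    have h2 : (K * Kᵀ) * T = R * ((S * S) * (R * R) * Ψ) * R := by
      rw [hQ, hT]; simp only [Matrix.mul_assoc]
    rw [h1, h2, ← Matrix.add_mul, ← Matrix.mul_add, hc, Matrix.mul_zero, Matrix.zero_mul]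
  set N : Matrix (Fin n) (Fin n) ℝ := T * (K * Kᵀ) with hN
  have hQT : (K * Kᵀ) * T = -N := eq_neg_of_add_eq_zero_right hsand
  have hQt : (K * Kᵀ)ᵀ = K * Kᵀ := by
    rw [Matrix.transpose_mul, Matrix.transpose_transpose]
  have hNt : Nᵀ = N := by
    rw [hN, Matrix.transpose_mul, hQt, hTt, Matrix.mul_neg, hQT, neg_neg]
  have hQN : (K * Kᵀ) * N = -(N * (K * Kᵀ)) := by
    calc (K * Kᵀ) * N = (K * Kᵀ) * (T * (K * Kᵀ)) := by rw [hN]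
      _ = ((K * Kᵀ) * T) * (K * Kᵀ) := by rw [← Matrix.mul_assoc (K * Kᵀ) T (K * Kᵀ)]
      _ = (-N) * (K * Kᵀ) := by rw [hQT]
      _ = -(N * (K * Kᵀ)) := by rw [Matrix.neg_mul]
  -- trace argument
  have htr : (N * (K * Kᵀ) * N).trace = 0 := by
    have e1 : N * (K * Kᵀ) * N = -(N * N * (K * Kᵀ)) := by
      calc N * (K * Kᵀ) * N = N * ((K * Kᵀ) * N) := by rw [Matrix.mul_assoc]
        _ = N * (-(N * (K * Kᵀ))) := by rw [hQN]
        _ = -(N * (N * (K * Kᵀ))) := by rw [Matrix.mul_neg]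
        _ = -(N * N * (K * Kᵀ)) := by rw [Matrix.mul_assoc N N (K * Kᵀ)]
    have e2 : (N * (K * Kᵀ) * N).trace = (N * N * (K * Kᵀ)).trace := by
      rw [Matrix.trace_mul_comm (N * (K * Kᵀ)) N, ← Matrix.mul_assoc]
    have e3 : (N * (K * Kᵀ) * N).trace = -((N * N * (K * Kᵀ)).trace) := by
      rw [e1, Matrix.trace_neg]
    linarith
  have hKN : Kᵀ * N = 0 := by
    apply trace_transpose_mul_self_eq_zero'
    have : (Kᵀ * N)ᵀ * (Kᵀ * N) = N * (K * Kᵀ) * N := by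
      rw [Matrix.transpose_mul, Matrix.transpose_transpose, hNt]
      simp only [Matrix.mul_assoc]
    rw [this, htr]
  have hNK : N * K = 0 := by
    have := congrArg Matrix.transpose hKN
    rwa [Matrix.transpose_mul, Matrix.transpose_transpose, hNt, Matrix.transpose_zero] at this
  have hNzero : N = 0 := by
    have h1 : (T * K) * (Kᴴ * K) = 0 := by
      rw [real_conjTranspose_eq]
      calc (T * K) * (Kᵀ * K) = (T * (K * Kᵀ)) * K := by simp only [Matrix.mul_assoc]
        _ = 0 := by rw [← hN, hNK]
    have h2 := (Matrix.mul_conjTranspose_mul_self_eq_zero K (T * K)).mp h1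
    rw [real_conjTranspose_eq] at h2
    rw [hN, ← Matrix.mul_assoc, h2]
  have hTK : T * K = 0 := by
    have h1 : T * (K * Kᴴ) = 0 := by rw [real_conjTranspose_eq, ← hN, hNzero]
    exact (Matrix.mul_self_mul_conjTranspose_eq_zero K T).mp h1
  -- key: Q * (R * Ψ) = 0
  have hc' : (S * S) * (R * R) * Ψ = -(Ψ * (R * R) * (S * S)) :=
    eq_neg_of_add_eq_zero_left (by rw [add_comm]; exact hc)
  have key : (K * Kᵀ) * (R * Ψ) = 0 := by
    have h1 : (K * Kᵀ) * (R * Ψ) = R * ((S * S) * (R * R) * Ψ) := by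
      rw [hQ]; simp only [Matrix.mul_assoc]
    have h2 : R * (Ψ * (R * R) * (S * S)) = (T * K) * S := by
      rw [hT, hK]; simp only [Matrix.mul_assoc]
    rw [h1, hc', Matrix.mul_neg, h2, hTK, Matrix.zero_mul, neg_zero]
  -- range argument
  have hrange : LinearMap.range ((K * Kᵀ).mulVecLin) = LinearMap.range (K.mulVecLin) := by
    apply Submodule.eq_of_le_of_finrank_le
    · rw [Matrix.mulVecLin_mul]; exact LinearMap.range_comp_le_range _ _
    · have hr : (K * Kᵀ).rank = K.rank := by
        rw [← real_conjTranspose_eq K]; exact Matrix.rank_self_mul_conjTranspose K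
      exact le_of_eq hr.symm
  set ek : Fin n → ℝ := Pi.single k 1 with hek
  set u : Fin n → ℝ := (R * Ψ) *ᵥ ek with hu
  set v : Fin n → ℝ := (R * (S * S)) *ᵥ ek with hv
  have hvr : v ∈ LinearMap.range ((K * Kᵀ).mulVecLin) := by
    rw [hrange]
    refine ⟨S *ᵥ ek, ?_⟩
    rw [Matrix.mulVecLin_apply, Matrix.mulVec_mulVec, hv, hK, Matrix.mul_assoc]
  obtain ⟨x, hx⟩ := hvr
  rw [Matrix.mulVecLin_apply] at hx
  have huv : u ⬝ᵥ v = -((Ψ * (R * R) * (S * S)) k k) := by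
    have h1 : u ⬝ᵥ v = ((R * Ψ)ᵀ * (R * (S * S))) k k := by
      simp [hu, hv, hek, dotProduct, Matrix.mul_apply, Matrix.transpose_apply, mul_comm]
    have h2 : (R * Ψ)ᵀ * (R * (S * S)) = -(Ψ * (R * R) * (S * S)) := by
      rw [Matrix.transpose_mul, hΨ, hR]
      simp only [Matrix.neg_mul, Matrix.mul_assoc]
    rw [h1, h2, Matrix.neg_apply]
  have huv0 : u ⬝ᵥ v = 0 := by
    rw [← hx, Matrix.dotProduct_mulVec]
    have : u ᵥ* (K * Kᵀ) = (K * Kᵀ) *ᵥ u := by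
      conv_lhs => rw [← hQt]
      rw [Matrix.vecMul_transpose]
    rw [this, hu, Matrix.mulVec_mulVec, key, Matrix.zero_mulVec, zero_dotProduct]
  rw [← neg_eq_zero, ← huv, huv0]

/-- entry formula for a product with a diagonal matrix in the middle -/
lemma mul_diagonal_mul_apply {n : ℕ} (A B : Matrix (Fin n) (Fin n) ℝ) (w : Fin n → ℝ)
    (k l : Fin n) :
    (A * Matrix.diagonal w * B) k l = ∑ j, A k j * w j * B j l := by
  rw [Matrix.mul_apply]
  refine Finset.sum_congr rfl fun j _ => ?_
  rw [Matrix.mul_diagonal]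

lemma sel_sandwich {n : ℕ} (J : Finset (Fin n)) (ω : Fin n → ℝ) :
    (selMatrix J)ᵀ * Matrix.diagonal (fun j : {j // j ∈ J} => ω j) * selMatrix J
      = Matrix.diagonal (fun j => if j ∈ J then ω j else 0) := by
  ext a b
  rw [Matrix.mul_apply]
  have h1 : ∀ j : {j // j ∈ J},
      ((selMatrix J)ᵀ * Matrix.diagonal (fun j : {j // j ∈ J} => ω j)) a j
        * selMatrix J j b
      = if (j : Fin n) = a then (if (j : Fin n) = b then ω j else 0) else 0 := by
    intro j
    rw [Matrix.mul_diagonal, Matrix.transpose_apply]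
    simp only [selMatrix, Matrix.of_apply]
    split_ifs <;> simp_all
  rw [Finset.sum_congr rfl fun j _ => h1 j]
  rw [Finset.sum_coe_sort J (fun j => if j = a then (if j = b then ω j else 0) else 0)]
  rw [Finset.sum_ite_eq' J a (fun j => if j = b then ω j else 0)]
  rw [Matrix.diagonal_apply]
  by_cases hab : a = b <;> by_cases haJ : a ∈ J <;> simp_all

/-- rewriting `covRHS` with the `n × n` diagonal observation matrix -/
lemma covRHS_eq {n : ℕ} (ε : ℝ) (J : Finset (Fin n)) (ω : Fin n → ℝ)
    (φ F P : Matrix (Fin n) (Fin n) ℝ) :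
    covRHS ε J ω φ F P
      = (F + Fᵀ) + (diagInv P * P + P * diagInv P) -
        (1 / (2 * ε)) •
          ((P.hadamard φ) * Matrix.diagonal (fun j => if j ∈ J then ω j else 0) * P +
            P * Matrix.diagonal (fun j => if j ∈ J then ω j else 0) * (P.hadamard φ)) := by
  have hA : ∀ A B : Matrix (Fin n) (Fin n) ℝ,
      A * (selMatrix J)ᵀ * Matrix.diagonal (fun j : {j // j ∈ J} => ω j) * selMatrix J * B
        = A * Matrix.diagonal (fun j => if j ∈ J then ω j else 0) * B := by
    intro A B
    calc A * (selMatrix J)ᵀ * Matrix.diagonal (fun j : {j // j ∈ J} => ω j) * selMatrix J * B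
        = A * ((selMatrix J)ᵀ * Matrix.diagonal (fun j : {j // j ∈ J} => ω j) * selMatrix J) * B := by
          simp only [Matrix.mul_assoc]
      _ = A * Matrix.diagonal (fun j => if j ∈ J then ω j else 0) * B := by rw [sel_sandwich]
  rw [covRHS, hA, hA]

end Helpers
theorem covariance_diag_lower_inequality
    {n : ℕ} (hn : 0 < n) (ε ωmax C : ℝ) (hε : 0 < ε) (hC : 0 ≤ C)
    (J : Finset (Fin n)) (ω : Fin n → ℝ) (hω : ∀ j ∈ J, 0 ≤ ω j ∧ ω j ≤ ωmax)
    (φ : Matrix (Fin n) (Fin n) ℝ) (hφ : ∀ i j, 0 ≤ φ i j)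
    (P F : ℝ → Matrix (Fin n) (Fin n) ℝ)
    (hpsd : ∀ t, 0 ≤ t → (P t).PosSemidef)
    (hpos : ∀ t, 0 ≤ t → ∀ k, 0 < P t k k)
    (hF : ∀ t, 0 ≤ t → ∀ k,
      -2 * C * Real.sqrt (P t k k *
          (Finset.univ.sup' ⟨⟨0, hn⟩, Finset.mem_univ _⟩ fun j => P t j j))
        ≤ (F t + (F t)ᵀ) k k)
    (hode : ∀ t, 0 ≤ t → ∀ i l,
      HasDerivAt (fun s => P s i l) (covRHS ε J ω φ (F t) (P t) i l) t) :
    ∀ k, ∀ t, 0 ≤ t →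
      -2 * C * Real.sqrt (P t k k *
          (Finset.univ.sup' ⟨⟨0, hn⟩, Finset.mem_univ _⟩ fun j => P t j j))
        - ((∑ j ∈ J, φ k j) * ωmax / ε) * (P t k k *
            (Finset.univ.sup' ⟨⟨0, hn⟩, Finset.mem_univ _⟩ fun j => P t j j))
        + 2
      ≤ deriv (fun s => P s k k) t := by
  classical
  intro k t ht
  set w : Fin n → ℝ := fun j => if j ∈ J then ω j else 0 with hw
  have hw0 : ∀ j, 0 ≤ w j := by
    intro j; rw [hw]; dsimp only
    split_ifs with h
    · exact (hω j h).1
    · exact le_refl 0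
  have hsymP : ∀ s, 0 ≤ s → ∀ i j, P s i j = P s j i := by
    intro s hs i j
    have h2 : (P s)ᴴ j i = P s j i := congrFun (congrFun ((hpsd s hs).1) j) i
    simpa [Matrix.conjTranspose_apply] using h2
  set Gm : ℝ → Matrix (Fin n) (Fin n) ℝ := fun s =>
    (P s).hadamard φ * Matrix.diagonal w * P s
      + P s * Matrix.diagonal w * ((P s).hadamard φ) with hGm
  -- entrywise formula for covRHS
  have hcovE : ∀ s, ∀ i l, covRHS ε J ω φ (F s) (P s) i l
      = (F s + (F s)ᵀ) i l + (diagInv (P s) * P s + P s * diagInv (P s)) i l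
        - (1 / (2 * ε)) * Gm s i l := by
    intro s i l
    rw [covRHS_eq, ← hw]
    simp only [Matrix.sub_apply, Matrix.add_apply, Matrix.smul_apply, smul_eq_mul, hGm,
      Matrix.add_apply]
  -- antisymmetric part of covRHS
  have hdiffsym : ∀ s, 0 ≤ s → ∀ i l,
      covRHS ε J ω φ (F s) (P s) i l - covRHS ε J ω φ (F s) (P s) l i
        = -(1 / (2 * ε)) * (Gm s i l - Gm s l i) := by
    intro s hs i l
    have hFs : (F s + (F s)ᵀ) i l = (F s + (F s)ᵀ) l i := by
      simp [Matrix.add_apply, Matrix.transpose_apply, add_comm]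
    have hDs : (diagInv (P s) * P s + P s * diagInv (P s)) i l
        = (diagInv (P s) * P s + P s * diagInv (P s)) l i := by
      simp only [diagInv, Matrix.add_apply, Matrix.diagonal_mul, Matrix.mul_diagonal]
      rw [hsymP s hs i l]; ring
    rw [hcovE s i l, hcovE s l i, hFs, hDs]; ring
  -- symmetry of Gm for positive times
  have hGpos : ∀ s, 0 < s → ∀ i l, Gm s i l = Gm s l i := by
    intro s hs i l
    have d1 := hode s hs.le i l
    have d2 := hode s hs.le l i
    have hev : (fun r => P r i l) =ᶠ[nhds s] (fun r => P r l i) := by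
      filter_upwards [Ioi_mem_nhds hs] with r hr
      exact hsymP r hr.le i l
    have d2' : HasDerivAt (fun r => P r i l) (covRHS ε J ω φ (F s) (P s) l i) s :=
      d2.congr_of_eventuallyEq hev
    have heq : covRHS ε J ω φ (F s) (P s) i l = covRHS ε J ω φ (F s) (P s) l i :=
      d1.unique d2'
    have h0 := hdiffsym s hs.le i l
    rw [heq, sub_self] at h0
    have hc2 : -(1 / (2 * ε)) ≠ 0 := by
      have h1 : (0:ℝ) < 1 / (2 * ε) := by positivity
      exact neg_ne_zero.mpr (ne_of_gt h1)
    have h3 := (mul_eq_zero.mp h0.symm).resolve_left hc2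
    linarith [sub_eq_zero.mp h3]
  -- symmetry of Gm at all nonnegative times (continuity at 0)
  have hGsym : ∀ s, 0 ≤ s → ∀ i l, Gm s i l = Gm s l i := by
    intro s hs i l
    rcases lt_or_eq_of_le hs with h | h
    · exact hGpos s h i l
    · subst h
      have hcont : ∀ a b : Fin n, ContinuousAt (fun r => P r a b) 0 :=
        fun a b => (hode 0 le_rfl a b).continuousAt
      have hGc : ∀ a b : Fin n, ContinuousAt (fun r => Gm r a b) 0 := by
        intro a b
        have hrepr : (fun r => Gm r a b)
            = (fun r => (∑ j, P r a j * φ a j * w j * P r j b)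
                + ∑ j, P r a j * w j * (P r j b * φ j b)) := by
          funext r
          simp only [hGm]
          rw [Matrix.add_apply, mul_diagonal_mul_apply, mul_diagonal_mul_apply]
          simp only [Matrix.hadamard_apply]
        rw [hrepr]
        apply ContinuousAt.add
        · exact tendsto_finset_sum _ fun j _ =>
            (((hcont a j).mul continuousAt_const).mul continuousAt_const).mul (hcont j b)
        · exact tendsto_finset_sum _ fun j _ =>
            ((hcont a j).mul continuousAt_const).mul ((hcont j b).mul continuousAt_const)
      set g : ℝ → ℝ := fun r => Gm r i l - Gm r l i with hg
      have hgc : ContinuousAt g 0 := (hGc i l).sub (hGc l i)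
      have l1 : Filter.Tendsto g (nhdsWithin 0 (Set.Ioi 0)) (nhds (g 0)) :=
        hgc.tendsto.mono_left nhdsWithin_le_nhds
      have l2 : Filter.Tendsto g (nhdsWithin 0 (Set.Ioi 0)) (nhds 0) := by
        refine Filter.Tendsto.congr' ?_ tendsto_const_nhds
        filter_upwards [self_mem_nhdsWithin] with r hr
        exact (sub_eq_zero.mpr (hGpos r hr i l)).symm
      have hg0 : g 0 = 0 := tendsto_nhds_unique l1 l2
      exact sub_eq_zero.mp hg0
  -- Set-up for the core algebra lemma at time t
  have hpsdt := hpsd t ht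
  obtain ⟨S, hSS0, hSH⟩ : ∃ S : Matrix (Fin n) (Fin n) ℝ, S * S = P t ∧ Sᴴ = S := by
    open scoped MatrixOrder in
    exact ⟨CFC.sqrt (P t), CFC.sqrt_mul_sqrt_self (P t) hpsdt.nonneg,
      (Matrix.nonneg_iff_posSemidef.mp (CFC.sqrt_nonneg (P t))).1⟩
  have hSS : S * S = P t := hSS0
  have hSt : Sᵀ = S := by
    rw [← real_conjTranspose_eq]; exact hSH
  set R := Matrix.diagonal (fun j => Real.sqrt (w j)) with hRdef
  have hRt : Rᵀ = R := Matrix.diagonal_transpose _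
  have hRR : R * R = Matrix.diagonal w := by
    rw [hRdef, Matrix.diagonal_mul_diagonal]
    have hfun : (fun i => Real.sqrt (w i) * Real.sqrt (w i)) = w :=
      funext fun j => Real.mul_self_sqrt (hw0 j)
    rw [hfun]
  set Pl := (P t).hadamard φ with hPldef
  set Ψ := Pl - Plᵀ with hΨdef
  have hΨt : Ψᵀ = -Ψ := by
    rw [hΨdef, Matrix.transpose_sub, Matrix.transpose_transpose, neg_sub]
  have hPt : (P t)ᵀ = P t := by
    ext i l; rw [Matrix.transpose_apply]; exact hsymP t ht l i
  have hGmt : Gm t = Pl * Matrix.diagonal w * P t + P t * Matrix.diagonal w * Pl := by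
    rw [hGm]
  have hGt : (Gm t)ᵀ = Plᵀ * Matrix.diagonal w * P t + P t * Matrix.diagonal w * Plᵀ := by
    rw [hGmt, Matrix.transpose_add]
    simp only [Matrix.transpose_mul, Matrix.diagonal_transpose, hPt]
    rw [add_comm]
    simp only [Matrix.mul_assoc]
  have hGmsymm : Gm t = (Gm t)ᵀ := by
    ext i l; rw [Matrix.transpose_apply]; exact hGsym t ht i l
  have hcΨ : Ψ * (R * R) * (S * S) + (S * S) * (R * R) * Ψ = 0 := by
    rw [hRR, hSS, hΨdef]
    have expand : (Pl - Plᵀ) * Matrix.diagonal w * P t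
          + P t * Matrix.diagonal w * (Pl - Plᵀ)
        = (Pl * Matrix.diagonal w * P t + P t * Matrix.diagonal w * Pl)
          - (Plᵀ * Matrix.diagonal w * P t + P t * Matrix.diagonal w * Plᵀ) := by
      simp only [Matrix.sub_mul, Matrix.mul_sub]; abel
    rw [expand, ← hGt, ← hGmt, ← hGmsymm, sub_self]
  have hdiagzero := core_diag_zero R S Ψ hRt hSt hΨt hcΨ k
  rw [hRR, hSS] at hdiagzero
  have hexpand : (Ψ * Matrix.diagonal w * P t) k k
      = (Pl * Matrix.diagonal w * P t) k k - (Plᵀ * Matrix.diagonal w * P t) k k := by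
    rw [hΨdef]; simp [Matrix.sub_mul, Matrix.sub_apply]
  have hswap : (Plᵀ * Matrix.diagonal w * P t) k k
      = (P t * Matrix.diagonal w * Pl) k k := by
    rw [mul_diagonal_mul_apply, mul_diagonal_mul_apply]
    refine Finset.sum_congr rfl fun j _ => ?_
    rw [Matrix.transpose_apply, hsymP t ht j k]; ring
  have hS21 : (P t * Matrix.diagonal w * Pl) k k = (Pl * Matrix.diagonal w * P t) k k := by
    rw [← hswap]; linarith [hexpand ▸ hdiagzero]
  have hGkk : Gm t k k = 2 * ((Pl * Matrix.diagonal w * P t) k k) := by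
    rw [hGmt, Matrix.add_apply, hS21]; ring
  -- bound on S1
  set m : ℝ := Finset.univ.sup' ⟨⟨0, hn⟩, Finset.mem_univ _⟩ (fun j => P t j j) with hm
  have hmj : ∀ j, P t j j ≤ m := by
    intro j; rw [hm]; exact Finset.le_sup' (fun i => P t i i) (Finset.mem_univ j)
  have hmpos : 0 < m := lt_of_lt_of_le (hpos t ht k) (hmj k)
  have hS1bound : (Pl * Matrix.diagonal w * P t) k k
      ≤ (∑ j ∈ J, φ k j) * ωmax * (P t k k * m) := by
    rw [mul_diagonal_mul_apply]
    have step1 : ∀ j, Pl k j * w j * P t j k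
        = (if j ∈ J then P t k j * φ k j * ω j * P t j k else 0) := by
      intro j
      rw [hPldef, Matrix.hadamard_apply, hw]
      dsimp only
      split_ifs with h
      · rfl
      · ring
    rw [Finset.sum_congr rfl fun j _ => step1 j, Finset.sum_ite_mem, Finset.univ_inter]
    have hrhs : (∑ j ∈ J, φ k j) * ωmax * (P t k k * m)
        = ∑ j ∈ J, φ k j * (ωmax * (P t k k * m)) := by
      rw [Finset.sum_mul, Finset.sum_mul]
      exact Finset.sum_congr rfl fun j _ => by ring
    rw [hrhs]
    refine Finset.sum_le_sum fun j hj => ?_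
    have hcs : P t k j * P t k j ≤ P t k k * P t j j := by
      by_cases hkj : k = j
      · subst hkj; exact le_refl _
      · have hq := (hpsd t ht).dotProduct_mulVec_nonneg (Pi.single k (P t j j) + Pi.single j (-(P t k j)))
        have hq' : 0 ≤ P t j j * (P t k k * P t j j + P t k j * (-(P t k j)))
            + (-(P t k j)) * (P t j k * P t j j + P t j j * (-(P t k j))) := by
          have hexp : star (Pi.single k (P t j j) + Pi.single j (-(P t k j)))
                ⬝ᵥ (P t *ᵥ (Pi.single k (P t j j) + Pi.single j (-(P t k j))))
              = P t j j * (P t k k * P t j j + P t k j * (-(P t k j)))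
                + (-(P t k j)) * (P t j k * P t j j + P t j j * (-(P t k j))) := by
            rw [Matrix.mulVec_add, Matrix.mulVec_single, Matrix.mulVec_single]
            rw [star_trivial, add_dotProduct, single_dotProduct,
              single_dotProduct]
            simp only [Pi.add_apply, Pi.smul_apply, Matrix.col_apply, MulOpposite.smul_eq_mul_unop,
              MulOpposite.unop_op]
          rw [← hexp]; exact hq
        have hjk := hsymP t ht j k
        rw [hjk] at hq'
        nlinarith [hpos t ht j, hq', sq_nonneg (P t k j)]
    have h1 : ω j * (P t k j * P t k j) ≤ ωmax * (P t k k * m) := by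
      have h2 : P t k j * P t k j ≤ P t k k * m :=
        hcs.trans (mul_le_mul_of_nonneg_left (hmj j) (le_of_lt (hpos t ht k)))
      have h3 : (0:ℝ) ≤ ωmax := le_trans (hω j hj).1 (hω j hj).2
      exact mul_le_mul (hω j hj).2 h2 (mul_self_nonneg _) h3
    calc P t k j * φ k j * ω j * P t j k
        = φ k j * (ω j * (P t k j * P t k j)) := by rw [hsymP t ht j k]; ring
      _ ≤ φ k j * (ωmax * (P t k k * m)) := mul_le_mul_of_nonneg_left h1 (hφ k j)
  -- assemble
  have hder : deriv (fun r => P r k k) t = covRHS ε J ω φ (F t) (P t) k k :=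
    (hode t ht k k).deriv
  have hdiag2 : (diagInv (P t) * P t + P t * diagInv (P t)) k k = 2 := by
    have hk0 : P t k k ≠ 0 := (hpos t ht k).ne'
    simp only [diagInv, Matrix.add_apply, Matrix.diagonal_mul, Matrix.mul_diagonal]
    field_simp
    norm_num
  have hFk := hF t ht k
  rw [← hm] at hFk
  have hfrac : (1 / (2 * ε)) * (2 * ((Pl * Matrix.diagonal w * P t) k k))
      = ((Pl * Matrix.diagonal w * P t) k k) / ε := by
    field_simp
  have hb : ((Pl * Matrix.diagonal w * P t) k k) / ε
      ≤ ((∑ j ∈ J, φ k j) * ωmax / ε) * (P t k k * m) := by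
    rw [div_mul_eq_mul_div]
    exact (div_le_div_iff_of_pos_right hε).mpr hS1bound
  rw [hder, hcovE t k k, hdiag2, hGkk, hfrac]
  linarith [hFk, hb]
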